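/- Let G be a finite simple graph with n vertices and m edges. The F-coindex of the total graph satisfies F̄(T(G)) = (m+n-9)·F(G) + 4(m+n-1)·M₁(G) + 2(m+n-1)·M₂(G) - ξ₄(G) - 3·ReZG₃(G). -/

import Mathlib

open SimpleGraph Finset
open scoped Classical

noncomputable section
namespace Paper

variable {V : Type*} [Fintype V]

/-- Degree as an integer. -/
def d (G : SimpleGraph V) (v : V) : ℤ := G.degree v

/-- Number of edges. -/
def m (G : SimpleGraph V) : ℤ := G.edgeFinset.card

/-- Sum over unordered edges of a symmetric vertex-pair function. -/
def edgeSum (G : SimpleGraph V) (f : V → V → ℤ) (hf : ∀ u v, f u v = f v u) : ℤ :=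
  ∑ e ∈ G.edgeFinset, Sym2.lift ⟨f, hf⟩ e

/-- First Zagreb index. -/
def M1 (G : SimpleGraph V) : ℤ := ∑ v, d G v ^ 2

/-- Second Zagreb index. -/
def M2 (G : SimpleGraph V) : ℤ :=
  edgeSum G (fun u v => d G u * d G v) (by intros; ring)

/-- F-index. -/
def F (G : SimpleGraph V) : ℤ := ∑ v, d G v ^ 3

/-- ξ₄. -/
def xi4 (G : SimpleGraph V) : ℤ := ∑ v, d G v ^ 4

/-- Redefined third Zagreb index. -/
def ReZG3 (G : SimpleGraph V) : ℤ :=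
  edgeSum G (fun u v => d G u * d G v * (d G u + d G v)) (by intros; ring)

/-- F-coindex: sum over edges of the complement with degrees in G. -/
def Fbar (G : SimpleGraph V) : ℤ :=
  edgeSum Gᶜ (fun u v => d G u ^ 2 + d G v ^ 2) (by intros; ring)

/-- Subdivision graph. -/
def subdivision (G : SimpleGraph V) : SimpleGraph (V ⊕ G.edgeSet) where
  Adj x y :=
    match x, y with
    | Sum.inl u, Sum.inr e => u ∈ (e : Sym2 V)
    | Sum.inr e, Sum.inl u => u ∈ (e : Sym2 V)
    | _, _ => False
  symm := by constructor; rintro (u | e) (v | f) h <;> first | exact h | exact h.elim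
  loopless := by constructor; rintro (u | e) <;> simp

/-- Vertex-semitotal graph. -/
def vertexSemitotal (G : SimpleGraph V) : SimpleGraph (V ⊕ G.edgeSet) where
  Adj x y :=
    match x, y with
    | Sum.inl u, Sum.inl v => G.Adj u v
    | Sum.inl u, Sum.inr e => u ∈ (e : Sym2 V)
    | Sum.inr e, Sum.inl u => u ∈ (e : Sym2 V)
    | _, _ => False
  symm := by
    constructor
    rintro (u | e) (v | f) h
    · exact G.adj_symm h
    · exact h
    · exact h
    · exact h.elim
  loopless := by
    constructor
    rintro (u | e) h
    · exact G.irrefl h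
    · exact h

/-- Edge-semitotal graph. -/
def edgeSemitotal (G : SimpleGraph V) : SimpleGraph (V ⊕ G.edgeSet) where
  Adj x y :=
    match x, y with
    | Sum.inl u, Sum.inr e => u ∈ (e : Sym2 V)
    | Sum.inr e, Sum.inl u => u ∈ (e : Sym2 V)
    | Sum.inr e, Sum.inr f => e ≠ f ∧ ∃ v, v ∈ (e : Sym2 V) ∧ v ∈ (f : Sym2 V)
    | _, _ => False
  symm := by
    constructor
    rintro (u | e) (v | f) h
    · exact h.elim
    · exact h
    · exact h
    · obtain ⟨hne, w, h1, h2⟩ := h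
      exact ⟨hne.symm, w, h2, h1⟩
  loopless := by
    constructor
    rintro (u | e) h
    · exact h
    · exact h.1 rfl

/-- Total graph. -/
def total (G : SimpleGraph V) : SimpleGraph (V ⊕ G.edgeSet) where
  Adj x y :=
    match x, y with
    | Sum.inl u, Sum.inl v => G.Adj u v
    | Sum.inl u, Sum.inr e => u ∈ (e : Sym2 V)
    | Sum.inr e, Sum.inl u => u ∈ (e : Sym2 V)
    | Sum.inr e, Sum.inr f => e ≠ f ∧ ∃ v, v ∈ (e : Sym2 V) ∧ v ∈ (f : Sym2 V)
  symm := by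
    constructor
    rintro (u | e) (v | f) h
    · exact G.adj_symm h
    · exact h
    · exact h
    · obtain ⟨hne, w, h1, h2⟩ := h
      exact ⟨hne.symm, w, h2, h1⟩
  loopless := by
    constructor
    rintro (u | e) h
    · exact G.irrefl h
    · exact h.1 rfl

/-- Paraline graph: line graph of the subdivision graph. -/
def paraline (G : SimpleGraph V) : SimpleGraph (subdivision G).edgeSet :=
  (subdivision G).lineGraph



section Aux
variable {V : Type*} [Fintype V]

lemma sum_darts_edge (G : SimpleGraph V) (f : Sym2 V → ℤ) :
    ∑ dd : G.Dart, f dd.edge = 2 * ∑ e ∈ G.edgeFinset, f e := by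
  classical
  rw [← Finset.sum_fiberwise_of_maps_to (g := Dart.edge) (t := G.edgeFinset)
    (fun dd _ => by rw [mem_edgeFinset]; exact dd.edge_mem)]
  rw [Finset.mul_sum]
  refine Finset.sum_congr rfl fun e he => ?_
  rw [Finset.sum_congr rfl (fun dd hd => by rw [(Finset.mem_filter.1 hd).2]),
    Finset.sum_const, G.dart_edge_fiber_card e (mem_edgeFinset.1 he)]
  ring

lemma sum_darts_fst (G : SimpleGraph V) (g : V → ℤ) :
    ∑ dd : G.Dart, g dd.fst = ∑ v, d G v * g v := by
  classical
  rw [← Finset.sum_fiberwise_of_maps_to (g := fun dd : G.Dart => dd.fst) (t := Finset.univ)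
    (fun dd _ => Finset.mem_univ _)]
  refine Finset.sum_congr rfl fun v _ => ?_
  rw [Finset.sum_congr rfl (fun dd hd => by rw [(Finset.mem_filter.1 hd).2]),
    Finset.sum_const, G.dart_fst_fiber_card_eq_degree v, d]
  ring

lemma sum_darts_snd (G : SimpleGraph V) (g : V → ℤ) :
    ∑ dd : G.Dart, g dd.snd = ∑ v, d G v * g v := by
  rw [← sum_darts_fst]
  exact Fintype.sum_bijective Dart.symm (Function.Involutive.bijective Dart.symm_involutive)
    _ _ (fun dd => rfl)

lemma edgeSum_add (G : SimpleGraph V) (g : V → ℤ) (h : ∀ u v : V, g u + g v = g v + g u) :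
    ∑ e ∈ G.edgeFinset, Sym2.lift ⟨fun u v => g u + g v, h⟩ e = ∑ v, d G v * g v := by
  have h2 := sum_darts_edge G (Sym2.lift ⟨fun u v => g u + g v, h⟩)
  have : ∑ dd : G.Dart, Sym2.lift ⟨fun u v => g u + g v, h⟩ dd.edge
      = ∑ dd : G.Dart, (g dd.fst + g dd.snd) := by
    refine Fintype.sum_congr _ _ fun dd => ?_
    rw [Dart.edge, Sym2.lift_mk]
  rw [this, Finset.sum_add_distrib, sum_darts_fst, sum_darts_snd, ← two_mul] at h2
  omega

lemma edgeSum_add' (G : SimpleGraph V) (f : V → V → ℤ) (hf : ∀ u v, f u v = f v u)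
    (g : V → ℤ) (hfg : ∀ u v, f u v = g u + g v) :
    edgeSum G f hf = ∑ v, d G v * g v := by
  rw [edgeSum, ← edgeSum_add G g (fun u v => by rw [← hfg, ← hfg, hf])]
  refine Finset.sum_congr rfl fun e _ => ?_
  induction e with
  | _ u v => rw [Sym2.lift_mk, Sym2.lift_mk]; exact hfg u v

/-- Degree sum over an edge. -/
def ds (G : SimpleGraph V) : Sym2 V → ℤ :=
  Sym2.lift ⟨fun u v => d G u + d G v, by intros; ring⟩

lemma degree_total_inl (G : SimpleGraph V) (v : V) :
    (total G).degree (Sum.inl v) = 2 * G.degree v := by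
  classical
  rw [← card_neighborSet_eq_degree]
  have e1 : (total G).neighborSet (Sum.inl v) ≃
      {u : V // G.Adj v u} ⊕ {e : G.edgeSet // v ∈ (e : Sym2 V)} := Equiv.subtypeSum
  have e2 : {e : G.edgeSet // v ∈ (e : Sym2 V)} ≃ G.incidenceSet v :=
    { toFun := fun f => ⟨f.1.1, f.1.2, f.2⟩
      invFun := fun f => ⟨⟨f.1, f.2.1⟩, f.2.2⟩
      left_inv := fun f => rfl
      right_inv := fun f => rfl }
  rw [Fintype.card_congr e1, Fintype.card_sum, Fintype.card_congr e2,
    card_incidenceSet_eq_degree]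
  have : Fintype.card {u : V // G.Adj v u} = G.degree v := by
    rw [← card_neighborSet_eq_degree]; rfl
  omega

lemma incidence_inter (G : SimpleGraph V) {u v : V} (h : G.Adj u v) [DecidableEq V] :
    G.incidenceFinset u ∩ G.incidenceFinset v = {s(u, v)} := by
  ext f
  simp only [mem_inter, mem_incidenceFinset, mem_singleton, incidenceSet]
  constructor
  · rintro ⟨⟨hf, hu⟩, ⟨-, hv⟩⟩
    exact (Sym2.mem_and_mem_iff h.ne).mp ⟨hu, hv⟩
  · rintro rfl
    exact ⟨⟨(G.mem_edgeSet.mpr h), Sym2.mem_mk_left _ _⟩, (G.mem_edgeSet.mpr h),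
      Sym2.mem_mk_right _ _⟩

lemma degree_total_inr (G : SimpleGraph V) (e : G.edgeSet) :
    (total G).degree (Sum.inr e) =
      Sym2.lift ⟨fun u v => G.degree u + G.degree v, by intros; apply Nat.add_comm⟩
        (e : Sym2 V) := by
  classical
  obtain ⟨ev, he⟩ := e
  induction ev with
  | _ u v =>
  rw [Sym2.lift_mk]; dsimp only
  have hadj : G.Adj u v := he
  rw [← card_neighborSet_eq_degree]
  have e1 : (total G).neighborSet (Sum.inr ⟨s(u,v), he⟩) ≃
      {w : V // w ∈ s(u, v)} ⊕
        {f : G.edgeSet // (⟨s(u,v), he⟩ : G.edgeSet) ≠ f ∧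
          ∃ w, w ∈ s(u,v) ∧ w ∈ (f : Sym2 V)} := Equiv.subtypeSum
  rw [Fintype.card_congr e1, Fintype.card_sum]
  have c1 : Fintype.card {w : V // w ∈ s(u, v)} = 2 := by
    rw [Fintype.card_subtype]
    have : (univ.filter (· ∈ s(u, v))) = {u, v} := by
      ext w; simp [Sym2.mem_iff]
    rw [this, card_insert_of_notMem (by simp [hadj.ne]), card_singleton]
  have c2 : Fintype.card {f : G.edgeSet // (⟨s(u,v), he⟩ : G.edgeSet) ≠ f ∧
      ∃ w, w ∈ s(u,v) ∧ w ∈ (f : Sym2 V)} =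
      ((G.incidenceFinset u ∪ G.incidenceFinset v).erase s(u, v)).card := by
    rw [Fintype.card_subtype]
    refine Finset.card_bij (fun f _ => (f : Sym2 V)) ?_ ?_ ?_
    · rintro f hf
      simp only [mem_filter, mem_univ, true_and] at hf
      obtain ⟨hne, w, hw1, hw2⟩ := hf
      rw [mem_erase]
      refine ⟨fun hc => hne (Subtype.ext hc.symm), ?_⟩
      rw [Sym2.mem_iff] at hw1
      rcases hw1 with rfl | rfl
      · exact mem_union_left _ (by rw [mem_incidenceFinset]; exact ⟨f.2, hw2⟩)
      · exact mem_union_right _ (by rw [mem_incidenceFinset]; exact ⟨f.2, hw2⟩)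
    · intro f1 _ f2 _ hh; exact Subtype.ext hh
    · intro f hf
      rw [mem_erase, mem_union, mem_incidenceFinset, mem_incidenceFinset] at hf
      obtain ⟨hne, hf⟩ := hf
      have hfe : f ∈ G.edgeSet := by rcases hf with ⟨h1, _⟩ | ⟨h1, _⟩ <;> exact h1
      refine ⟨⟨f, hfe⟩, ?_, rfl⟩
      simp only [mem_filter, mem_univ, true_and]
      refine ⟨fun hc => hne (congrArg Subtype.val hc).symm, ?_⟩
      rcases hf with ⟨-, h2⟩ | ⟨-, h2⟩
      exacts [⟨u, Sym2.mem_mk_left _ _, h2⟩, ⟨v, Sym2.mem_mk_right _ _, h2⟩]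
  rw [c1, c2]
  have hmem : s(u, v) ∈ G.incidenceFinset u ∪ G.incidenceFinset v :=
    mem_union_left _
      (by rw [mem_incidenceFinset]; exact ⟨(G.mem_edgeSet.mpr hadj), Sym2.mem_mk_left _ _⟩)
  have h1 := Finset.card_erase_of_mem hmem
  have h2 := Finset.card_union_add_card_inter (G.incidenceFinset u) (G.incidenceFinset v)
  rw [incidence_inter G hadj, card_singleton, card_incidenceFinset_eq_degree,
    card_incidenceFinset_eq_degree] at h2
  have hpos : 0 < (G.incidenceFinset u ∪ G.incidenceFinset v).card := card_pos.2 ⟨_, hmem⟩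
  omega

lemma d_total_inl (G : SimpleGraph V) (v : V) :
    d (total G) (Sum.inl v) = 2 * d G v := by
  rw [d, d, degree_total_inl]; push_cast; ring

lemma d_total_inr (G : SimpleGraph V) (e : G.edgeSet) :
    d (total G) (Sum.inr e) = ds G (e : Sym2 V) := by
  rw [d, degree_total_inr]
  obtain ⟨ev, he⟩ := e
  induction ev with
  | _ u v => rw [Sym2.lift_mk, ds, Sym2.lift_mk]; dsimp only; rw [d, d]; push_cast; ring

lemma sum_edgeSet (G : SimpleGraph V) (f : Sym2 V → ℤ) :
    ∑ e : G.edgeSet, f (e : Sym2 V) = ∑ e ∈ G.edgeFinset, f e := by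
  rw [Finset.sum_set_coe (s := G.edgeSet) (f := f)]
  exact Finset.sum_congr (by ext; simp) fun _ _ => rfl

lemma edgeSum_sq (G : SimpleGraph V) :
    ∑ e ∈ G.edgeFinset, ds G e ^ 2 = F G + 2 * M2 G := by
  have key : ∀ e : Sym2 V, ds G e ^ 2 =
      Sym2.lift ⟨fun u v => (fun w => d G w ^ 2) u + (fun w => d G w ^ 2) v,
        fun u v => by ring⟩ e +
      2 * Sym2.lift ⟨fun u v => d G u * d G v, fun u v => by ring⟩ e := by
    intro e
    induction e with
    | _ u v => rw [ds, Sym2.lift_mk, Sym2.lift_mk, Sym2.lift_mk]; dsimp only; ring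
  rw [Finset.sum_congr rfl (fun e _ => key e), Finset.sum_add_distrib, ← Finset.mul_sum,
    edgeSum_add]
  have hF : ∑ v, d G v * (fun w => d G w ^ 2) v = F G := by
    rw [F]; exact Finset.sum_congr rfl fun v _ => by dsimp only; ring
  rw [hF]
  rfl

lemma edgeSum_cube (G : SimpleGraph V) :
    ∑ e ∈ G.edgeFinset, ds G e ^ 3 = xi4 G + 3 * ReZG3 G := by
  have key : ∀ e : Sym2 V, ds G e ^ 3 =
      Sym2.lift ⟨fun u v => (fun w => d G w ^ 3) u + (fun w => d G w ^ 3) v,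
        fun u v => by ring⟩ e +
      3 * Sym2.lift ⟨fun u v => d G u * d G v * (d G u + d G v), fun u v => by ring⟩ e := by
    intro e
    induction e with
    | _ u v => rw [ds, Sym2.lift_mk, Sym2.lift_mk, Sym2.lift_mk]; dsimp only; ring
  rw [Finset.sum_congr rfl (fun e _ => key e), Finset.sum_add_distrib, ← Finset.mul_sum,
    edgeSum_add]
  have hx : ∑ v, d G v * (fun w => d G w ^ 3) v = xi4 G := by
    rw [xi4]; exact Finset.sum_congr rfl fun v _ => by dsimp only; ring
  rw [hx]
  rfl

lemma M1_total (G : SimpleGraph V) :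
    M1 (total G) = 4 * M1 G + F G + 2 * M2 G := by
  rw [M1, Fintype.sum_sum_type]
  have h1 : ∑ v, d (total G) (Sum.inl v) ^ 2 = ∑ v, 4 * d G v ^ 2 :=
    Finset.sum_congr rfl fun v _ => by rw [d_total_inl]; ring
  have h2 : ∑ e : G.edgeSet, d (total G) (Sum.inr e) ^ 2
      = ∑ e : G.edgeSet, ds G (e : Sym2 V) ^ 2 :=
    Finset.sum_congr rfl fun e _ => by rw [d_total_inr]
  rw [h1, h2, sum_edgeSet G (fun e => ds G e ^ 2), edgeSum_sq, ← Finset.mul_sum, M1]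
  ring

lemma F_total (G : SimpleGraph V) :
    F (total G) = 8 * F G + xi4 G + 3 * ReZG3 G := by
  rw [F, Fintype.sum_sum_type]
  have h1 : ∑ v, d (total G) (Sum.inl v) ^ 3 = ∑ v, 8 * d G v ^ 3 :=
    Finset.sum_congr rfl fun v _ => by rw [d_total_inl]; ring
  have h2 : ∑ e : G.edgeSet, d (total G) (Sum.inr e) ^ 3
      = ∑ e : G.edgeSet, ds G (e : Sym2 V) ^ 3 :=
    Finset.sum_congr rfl fun e _ => by rw [d_total_inr]
  rw [h1, h2, sum_edgeSet G (fun e => ds G e ^ 3), edgeSum_cube, ← Finset.mul_sum, F]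
  ring

lemma d_compl (H : SimpleGraph V) (v : V) :
    d Hᶜ v = (Fintype.card V : ℤ) - 1 - d H v := by
  have h2 := H.degree_lt_card_verts v
  have key : ((Fintype.card V - 1 - H.degree v : ℕ) : ℤ)
      = (Fintype.card V : ℤ) - 1 - (H.degree v : ℤ) := by omega
  rw [d, d, ← key]
  congr 1
  convert H.degree_compl v using 2

lemma Fbar_formula (H : SimpleGraph V) :
    Fbar H = ((Fintype.card V : ℤ) - 1) * M1 H - F H := by
  rw [Fbar, edgeSum_add' Hᶜ _ _ (fun v => d H v ^ 2) (fun u v => rfl)]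
  rw [Finset.sum_congr rfl (fun v _ => by rw [d_compl])]
  have : ∀ v : V, ((Fintype.card V : ℤ) - 1 - d H v) * d H v ^ 2 =
      ((Fintype.card V : ℤ) - 1) * d H v ^ 2 - d H v ^ 3 := fun v => by ring
  rw [Finset.sum_congr rfl (fun v _ => this v), Finset.sum_sub_distrib, ← Finset.mul_sum,
    M1, F]

lemma card_total (G : SimpleGraph V) :
    (Fintype.card (V ⊕ G.edgeSet) : ℤ) = (Fintype.card V : ℤ) + m G := by
  rw [Fintype.card_sum, m]
  have : Fintype.card G.edgeSet = G.edgeFinset.card := (Set.toFinset_card _).symm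
  rw [this]
  push_cast
  ring

end Aux


theorem stmt14 {V : Type*} [Fintype V] (G : SimpleGraph V) :
    Fbar (total G) =
      (m G + (Fintype.card V : ℤ) - 9) * F G + 4 * (m G + (Fintype.card V : ℤ) - 1) * M1 G +
        2 * (m G + (Fintype.card V : ℤ) - 1) * M2 G - xi4 G - 3 * ReZG3 G := by
  rw [Fbar_formula (total G), M1_total, F_total, card_total]
  ring

end Paper
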